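/- arXiv:2006.14444 — 4 statements merged into one kernel-verified Lean document; each statement's English description precedes it below -/
import Mathlib

section
/- In the expected two-block model, let A ⊆ V with α_i = |A ∩ V_i|/(n/2). If α₂ ≥ (1 − 2α₁)·q/p, then c({A ∪ V₂, A^c \ V₂}) ≤ c({A, A^c}). -/
theorem stmt5 {V : Type*} [Fintype V] [DecidableEq V] (n : ℕ) (hn : 0 < n)
    (V1 V2 : Finset V) (hdisj : Disjoint V1 V2) (hunion : V1 ∪ V2 = Finset.univ)
    (h1 : 2 * V1.card = n) (h2 : 2 * V2.card = n)
    (p q : ℝ) (hq : 0 < q) (hqp : q < p) (hp : p ≤ 1)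
    (w : V → V → ℝ)
    (hw : ∀ u v, w u v = if u = v then 0 else if (u ∈ V1 ↔ v ∈ V1) then p else q)
    (A : Finset V)
    (hα : (((A ∩ V2).card : ℝ) / ((n : ℝ) / 2)) ≥
      (1 - 2 * (((A ∩ V1).card : ℝ) / ((n : ℝ) / 2))) * q / p) :
    (∑ u ∈ A ∪ V2, ∑ v ∈ (A ∪ V2)ᶜ, w u v) ≤ ∑ u ∈ A, ∑ v ∈ Aᶜ, w u v := by
  classical
  have eval : ∀ (T U : Finset V) (c : ℝ), (∀ u ∈ T, ∀ v ∈ U, w u v = c) →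
      ∑ u ∈ T, ∑ v ∈ U, w u v = (T.card : ℝ) * U.card * c := by
    intro T U c h
    calc ∑ u ∈ T, ∑ v ∈ U, w u v = ∑ u ∈ T, ∑ v ∈ U, c :=
          Finset.sum_congr rfl fun u hu => Finset.sum_congr rfl (h u hu)
      _ = (T.card : ℝ) * U.card * c := by
          simp [Finset.sum_const, nsmul_eq_mul]; ring
  have key : ∀ S : Finset V, ∑ u ∈ S, ∑ v ∈ Sᶜ, w u v =
      p * (((S ∩ V1).card : ℝ) * ((Sᶜ ∩ V1).card : ℝ)
         + ((S ∩ V2).card : ℝ) * ((Sᶜ ∩ V2).card : ℝ))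
      + q * (((S ∩ V1).card : ℝ) * ((Sᶜ ∩ V2).card : ℝ)
         + ((S ∩ V2).card : ℝ) * ((Sᶜ ∩ V1).card : ℝ)) := by
    intro S
    have hS : S = (S ∩ V1) ∪ (S ∩ V2) := by
      rw [← Finset.inter_union_distrib_left, hunion, Finset.inter_univ]
    have hSc : Sᶜ = (Sᶜ ∩ V1) ∪ (Sᶜ ∩ V2) := by
      rw [← Finset.inter_union_distrib_left, hunion, Finset.inter_univ]
    have d1 : Disjoint (S ∩ V1) (S ∩ V2) :=
      hdisj.mono (Finset.inter_subset_right) (Finset.inter_subset_right)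
    have d2 : Disjoint (Sᶜ ∩ V1) (Sᶜ ∩ V2) :=
      hdisj.mono (Finset.inter_subset_right) (Finset.inter_subset_right)
    have inner : ∀ T : Finset V, ∑ u ∈ T, ∑ v ∈ Sᶜ, w u v =
        ∑ u ∈ T, ∑ v ∈ Sᶜ ∩ V1, w u v + ∑ u ∈ T, ∑ v ∈ Sᶜ ∩ V2, w u v := by
      intro T
      rw [← Finset.sum_add_distrib]
      apply Finset.sum_congr rfl
      intro u _
      rw [← Finset.sum_union d2, ← hSc]
    have hval : ∀ u ∈ S, ∀ v ∈ Sᶜ, w u v = if (u ∈ V1 ↔ v ∈ V1) then p else q := by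
      intro u hu v hv
      have hne : u ≠ v := by
        rintro rfl
        exact (Finset.mem_compl.mp hv) hu
      rw [hw]
      simp [hne]
    have e11 : ∑ u ∈ S ∩ V1, ∑ v ∈ Sᶜ ∩ V1, w u v
        = ((S ∩ V1).card : ℝ) * ((Sᶜ ∩ V1).card : ℝ) * p := by
      apply eval
      intro u hu v hv
      rw [hval u (Finset.mem_inter.mp hu).1 v (Finset.mem_inter.mp hv).1]
      simp [(Finset.mem_inter.mp hu).2, (Finset.mem_inter.mp hv).2]
    have e12 : ∑ u ∈ S ∩ V1, ∑ v ∈ Sᶜ ∩ V2, w u v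
        = ((S ∩ V1).card : ℝ) * ((Sᶜ ∩ V2).card : ℝ) * q := by
      apply eval
      intro u hu v hv
      rw [hval u (Finset.mem_inter.mp hu).1 v (Finset.mem_inter.mp hv).1]
      have : v ∉ V1 := Finset.disjoint_right.mp hdisj (Finset.mem_inter.mp hv).2
      simp [(Finset.mem_inter.mp hu).2, this]
    have e21 : ∑ u ∈ S ∩ V2, ∑ v ∈ Sᶜ ∩ V1, w u v
        = ((S ∩ V2).card : ℝ) * ((Sᶜ ∩ V1).card : ℝ) * q := by
      apply eval
      intro u hu v hv
      rw [hval u (Finset.mem_inter.mp hu).1 v (Finset.mem_inter.mp hv).1]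
      have : u ∉ V1 := Finset.disjoint_right.mp hdisj (Finset.mem_inter.mp hu).2
      simp [(Finset.mem_inter.mp hv).2, this]
    have e22 : ∑ u ∈ S ∩ V2, ∑ v ∈ Sᶜ ∩ V2, w u v
        = ((S ∩ V2).card : ℝ) * ((Sᶜ ∩ V2).card : ℝ) * p := by
      apply eval
      intro u hu v hv
      rw [hval u (Finset.mem_inter.mp hu).1 v (Finset.mem_inter.mp hv).1]
      have h1' : u ∉ V1 := Finset.disjoint_right.mp hdisj (Finset.mem_inter.mp hu).2
      have h2' : v ∉ V1 := Finset.disjoint_right.mp hdisj (Finset.mem_inter.mp hv).2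
      simp [h1', h2']
    have split : ∑ u ∈ S, ∑ v ∈ Sᶜ, w u v =
        ∑ u ∈ S ∩ V1, ∑ v ∈ Sᶜ, w u v + ∑ u ∈ S ∩ V2, ∑ v ∈ Sᶜ, w u v := by
      rw [← Finset.sum_union d1, ← hS]
    rw [split, inner, inner, e11, e12, e21, e22]
    ring
  -- set identities for S = A ∪ V2
  have s1 : (A ∪ V2) ∩ V1 = A ∩ V1 := by
    ext x
    simp only [Finset.mem_inter, Finset.mem_union]
    constructor
    · rintro ⟨h | h, hx1⟩
      · exact ⟨h, hx1⟩
      · exact absurd hx1 (Finset.disjoint_right.mp hdisj h)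
    · tauto
  have s2 : (A ∪ V2) ∩ V2 = V2 := by
    ext x; simp only [Finset.mem_inter, Finset.mem_union]; tauto
  have s3 : (A ∪ V2)ᶜ ∩ V1 = Aᶜ ∩ V1 := by
    ext x
    simp only [Finset.mem_inter, Finset.mem_compl, Finset.mem_union, not_or]
    constructor
    · rintro ⟨⟨h, _⟩, hx1⟩; exact ⟨h, hx1⟩
    · rintro ⟨h, hx1⟩
      exact ⟨⟨h, Finset.disjoint_left.mp hdisj hx1⟩, hx1⟩
  have s4 : (A ∪ V2)ᶜ ∩ V2 = ∅ := by
    ext x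
    simp only [Finset.mem_inter, Finset.mem_compl, Finset.mem_union, not_or,
      Finset.notMem_empty, iff_false]
    rintro ⟨⟨_, h⟩, hx⟩; exact h hx
  -- card facts
  have c1 : (Aᶜ ∩ V1).card = V1.card - (A ∩ V1).card := by
    have : V1 = (A ∩ V1) ∪ (Aᶜ ∩ V1) := by
      ext x
      simp only [Finset.mem_union, Finset.mem_inter, Finset.mem_compl]
      tauto
    have hd : Disjoint (A ∩ V1) (Aᶜ ∩ V1) := by
      rw [Finset.disjoint_left]
      intro x hx hx'
      exact (Finset.mem_compl.mp (Finset.mem_inter.mp hx').1) (Finset.mem_inter.mp hx).1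
    have := congrArg Finset.card this
    rw [Finset.card_union_of_disjoint hd] at this
    omega
  have c2 : (Aᶜ ∩ V2).card = V2.card - (A ∩ V2).card := by
    have : V2 = (A ∩ V2) ∪ (Aᶜ ∩ V2) := by
      ext x
      simp only [Finset.mem_union, Finset.mem_inter, Finset.mem_compl]
      tauto
    have hd : Disjoint (A ∩ V2) (Aᶜ ∩ V2) := by
      rw [Finset.disjoint_left]
      intro x hx hx'
      exact (Finset.mem_compl.mp (Finset.mem_inter.mp hx').1) (Finset.mem_inter.mp hx).1
    have := congrArg Finset.card this
    rw [Finset.card_union_of_disjoint hd] at this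
    omega
  rw [key A, key (A ∪ V2), s1, s2, s3, s4, c1, c2]
  set m : ℕ := V1.card with hm
  have hm2 : V2.card = m := by omega
  have ha_le : (A ∩ V1).card ≤ m := Finset.card_le_card Finset.inter_subset_right
  have hb_le : (A ∩ V2).card ≤ V2.card := Finset.card_le_card Finset.inter_subset_right
  set a : ℕ := (A ∩ V1).card
  set b : ℕ := (A ∩ V2).card
  have hmpos : 0 < m := by omega
  have hmR : (0:ℝ) < (m:ℝ) := by exact_mod_cast hmpos
  have hpR : (0:ℝ) < p := lt_trans hq hqp
  have hcast1 : ((m - a : ℕ) : ℝ) = (m:ℝ) - a := by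
    rw [Nat.cast_sub ha_le]
  have hcast2 : ((V2.card - b : ℕ) : ℝ) = (m:ℝ) - b := by
    rw [Nat.cast_sub hb_le, hm2]
  have hn2 : (n:ℝ) / 2 = (m:ℝ) := by
    have : (n:ℝ) = 2 * m := by exact_mod_cast h1.symm
    rw [this]; ring
  rw [hn2] at hα
  have hdiv : ((a:ℝ) / m) * m = (a:ℝ) := div_mul_cancel₀ _ (ne_of_gt hmR)
  have hkey : ((m:ℝ) - 2*a) * q ≤ p * b := by
    rw [ge_iff_le, div_le_div_iff₀ hpR hmR] at hα
    nlinarith [hα, hdiv]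
  have hbm : (b:ℝ) ≤ (m:ℝ) := by
    have : b ≤ m := by omega
    exact_mod_cast this
  rw [hcast1, hcast2, hm2]
  have hfac : ((m:ℝ) - b) * (p * b - ((m:ℝ) - 2*a) * q) ≥ 0 :=
    mul_nonneg (by linarith) (by linarith)
  simp only [Finset.card_empty, Nat.cast_zero]
  nlinarith [hfac]
end

section
/- In the expected two-block model with p > 0, every locally minimal cut respects the blocks: if {A, A^c} is a cut such that moving any single vertex to the other side does not decrease the cost, then for each i ∈ {1,2}, either V_i ⊆ A or V_i ⊆ A^c. -/
theorem stmt7 {V : Type*} [Fintype V] [DecidableEq V]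
    (V1 V2 : Finset V) (hdisj : Disjoint V1 V2) (hunion : V1 ∪ V2 = Finset.univ)
    (p q : ℝ) (hp : 0 < p) (hq : 0 ≤ q)
    (w : V → V → ℝ)
    (hw : ∀ u v, w u v = if u = v then 0 else if (u ∈ V1 ↔ v ∈ V1) then p else q)
    (A : Finset V)
    (hloc : ∀ x : V,
      (∑ u ∈ A, ∑ v ∈ Aᶜ, w u v) ≤
        ∑ u ∈ (if x ∈ A then A.erase x else insert x A),
          ∑ v ∈ (if x ∈ A then A.erase x else insert x A)ᶜ, w u v) :
    (V1 ⊆ A ∨ V1 ⊆ Aᶜ) ∧ (V2 ⊆ A ∨ V2 ⊆ Aᶜ) := by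
  have key : ∀ x y : V, x ∈ A → y ∉ A → (x ∈ V1 ↔ y ∈ V1) → False := by
    intro x y hxA hyA hxy
    have hxy' : x ≠ y := fun h => hyA (h ▸ hxA)
    -- inequality from flipping x (x ∈ A)
    have h1 : (∑ v ∈ Aᶜ, w x v) ≤ ∑ u ∈ A.erase x, w u x := by
      have H := hloc x
      rw [if_pos hxA, Finset.compl_erase] at H
      simp only [Finset.sum_insert (Finset.notMem_compl.mpr hxA),
        Finset.sum_add_distrib] at H
      rw [← Finset.add_sum_erase _ _ hxA] at H
      linarith
    -- inequality from flipping y (y ∉ A)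
    have h2 : (∑ u ∈ A, w u y) ≤ ∑ v ∈ Aᶜ.erase y, w y v := by
      have H := hloc y
      have hyc : y ∈ Aᶜ := Finset.mem_compl.mpr hyA
      rw [if_neg hyA, Finset.compl_insert, Finset.sum_insert hyA] at H
      have hrw : ∀ u : V, (∑ v ∈ Aᶜ, w u v) = w u y + ∑ v ∈ Aᶜ.erase y, w u v :=
        fun u => (Finset.add_sum_erase _ _ hyc).symm
      simp only [hrw, Finset.sum_add_distrib] at H
      linarith
    -- w x y = p
    have hwxy : w x y = p := by
      rw [hw, if_neg hxy', if_pos hxy]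
    -- equality 1
    have e1 : (∑ v ∈ Aᶜ, w x v) = p + ∑ v ∈ Aᶜ.erase y, w y v := by
      have hyc : y ∈ Aᶜ := Finset.mem_compl.mpr hyA
      rw [← Finset.add_sum_erase _ _ hyc, hwxy]
      congr 1
      apply Finset.sum_congr rfl
      intro v hv
      have hvy : v ≠ y := (Finset.mem_erase.mp hv).1
      have hvx : v ≠ x := by
        intro h
        exact (Finset.mem_compl.mp ((Finset.mem_erase.mp hv).2)) (h ▸ hxA)
      rw [hw, hw, if_neg (show ¬ x = v from fun h => hvx h.symm),
        if_neg (show ¬ y = v from fun h => hvy h.symm)]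
      by_cases hvV : v ∈ V1 <;> simp [hvV, hxy]
    -- equality 2
    have e2 : (∑ u ∈ A, w u y) = p + ∑ u ∈ A.erase x, w u x := by
      rw [← Finset.add_sum_erase _ _ hxA, hwxy]
      congr 1
      apply Finset.sum_congr rfl
      intro u hu
      have hux : u ≠ x := (Finset.mem_erase.mp hu).1
      have huy : u ≠ y := fun h => hyA (h ▸ (Finset.mem_erase.mp hu).2)
      rw [hw, hw, if_neg (show ¬ u = y from huy), if_neg (show ¬ u = x from hux)]
      by_cases huV : u ∈ V1 <;> simp [huV, hxy]
    linarith
  constructor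
  · by_contra hcon
    push_neg at hcon
    obtain ⟨hc1, hc2⟩ := hcon
    obtain ⟨a, haV, haA⟩ := Finset.not_subset.mp hc1
    obtain ⟨b, hbV, hbA⟩ := Finset.not_subset.mp hc2
    exact key b a (by simpa using hbA) haA (iff_of_true hbV haV)
  · by_contra hcon
    push_neg at hcon
    obtain ⟨hc1, hc2⟩ := hcon
    obtain ⟨a, haV, haA⟩ := Finset.not_subset.mp hc1
    obtain ⟨b, hbV, hbA⟩ := Finset.not_subset.mp hc2
    exact key b a (by simpa using hbA) haA
      (iff_of_false (Finset.disjoint_right.mp hdisj hbV) (Finset.disjoint_right.mp hdisj haV))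
end

section
/- In the expected two-block model with blocks of equal size n/2, if p < 2q then the cut {V₁, V₂} has cost q·n²/4, and any cut {X, X^c} with X ⊆ V₁ and |X| = ⌊n/4⌋ has cost p·⌊n/4⌋·⌈n/4⌉ + q·⌊n/4⌋·(n/2) ≤ q·n²/4. -/
theorem stmt8 {V : Type*} [Fintype V] [DecidableEq V] (n : ℕ) (hn : 0 < n)
    (V1 V2 : Finset V) (hdisj : Disjoint V1 V2) (hunion : V1 ∪ V2 = Finset.univ)
    (h1 : 2 * V1.card = n) (h2 : 2 * V2.card = n)
    (p q : ℝ) (hq : 0 ≤ q) (hqp : q < p) (hp : p ≤ 1) (hp2q : p < 2 * q)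
    (w : V → V → ℝ)
    (hw : ∀ u v, w u v = if u = v then 0 else if (u ∈ V1 ↔ v ∈ V1) then p else q)
    (X : Finset V) (hX : X ⊆ V1) (hXcard : X.card = n / 4) :
    (∑ u ∈ V1, ∑ v ∈ V1ᶜ, w u v) = q * (n : ℝ) ^ 2 / 4 ∧
      (∑ u ∈ X, ∑ v ∈ Xᶜ, w u v) =
        p * ((n / 4 : ℕ) : ℝ) * (((n + 3) / 4 : ℕ) : ℝ)
          + q * ((n / 4 : ℕ) : ℝ) * ((n : ℝ) / 2) ∧
      (∑ u ∈ X, ∑ v ∈ Xᶜ, w u v) ≤ q * (n : ℝ) ^ 2 / 4 := by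
  have hV2 : V1ᶜ = V2 := by
    ext v
    simp only [Finset.mem_compl]
    constructor
    · intro hv
      have := Finset.mem_union.mp (hunion ▸ Finset.mem_univ v)
      tauto
    · intro hv hv1
      exact (Finset.disjoint_left.mp hdisj hv1) hv
  have hXc : Xᶜ = (V1 \ X) ∪ V2 := by
    ext v
    simp only [Finset.mem_compl, Finset.mem_union, Finset.mem_sdiff]
    constructor
    · intro hv
      by_cases hv1 : v ∈ V1
      · exact Or.inl ⟨hv1, hv⟩
      · have := Finset.mem_union.mp (hunion ▸ Finset.mem_univ v)
        tauto
    · rintro (⟨hv1, hvx⟩ | hv2)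
      · exact hvx
      · intro hvx; exact (Finset.disjoint_left.mp hdisj (hX hvx)) hv2
  have hdisj2 : Disjoint (V1 \ X) V2 := hdisj.mono_left Finset.sdiff_subset
  have keyq : ∀ u ∈ V1, ∀ v ∈ V2, w u v = q := by
    intro u hu v hv
    have hne : u ≠ v := fun h => Finset.disjoint_left.mp hdisj hu (h ▸ hv)
    have hiff : ¬ (u ∈ V1 ↔ v ∈ V1) := by
      intro h; exact Finset.disjoint_left.mp hdisj (h.mp hu) hv
    rw [hw]; simp [hne, hiff]
  have keyp : ∀ u ∈ X, ∀ v ∈ V1 \ X, w u v = p := by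
    intro u hu v hv
    have hv1 := (Finset.mem_sdiff.mp hv).1
    have hvx := (Finset.mem_sdiff.mp hv).2
    have hne : u ≠ v := fun h => hvx (h ▸ hu)
    have hiff : (u ∈ V1 ↔ v ∈ V1) := ⟨fun _ => hv1, fun _ => hX hu⟩
    rw [hw]; simp [hne, hiff]
  have hc1 : (V1.card : ℝ) = (n : ℝ) / 2 := by
    have : (2 : ℝ) * V1.card = n := by exact_mod_cast h1
    linarith
  have hc2 : (V2.card : ℝ) = (n : ℝ) / 2 := by
    have : (2 : ℝ) * V2.card = n := by exact_mod_cast h2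
    linarith
  have hb : (V1 \ X).card = (n + 3) / 4 := by
    rw [Finset.card_sdiff_of_subset hX, hXcard]; omega
  have sum1 : (∑ u ∈ V1, ∑ v ∈ V1ᶜ, w u v) = q * (n : ℝ) ^ 2 / 4 := by
    rw [hV2]
    calc ∑ u ∈ V1, ∑ v ∈ V2, w u v = ∑ u ∈ V1, ∑ v ∈ V2, q :=
          Finset.sum_congr rfl fun u hu => Finset.sum_congr rfl fun v hv => keyq u hu v hv
      _ = (V1.card : ℝ) * ((V2.card : ℝ) * q) := by
          simp [Finset.sum_const, mul_comm]
      _ = q * (n : ℝ) ^ 2 / 4 := by rw [hc1, hc2]; ring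
  have sum2 : (∑ u ∈ X, ∑ v ∈ Xᶜ, w u v)
      = p * ((n / 4 : ℕ) : ℝ) * (((n + 3) / 4 : ℕ) : ℝ)
        + q * ((n / 4 : ℕ) : ℝ) * ((n : ℝ) / 2) := by
    rw [hXc]
    have : ∀ u ∈ X, ∑ v ∈ (V1 \ X) ∪ V2, w u v
        = (((n + 3) / 4 : ℕ) : ℝ) * p + (n : ℝ) / 2 * q := by
      intro u hu
      rw [Finset.sum_union hdisj2]
      have e1 : ∑ v ∈ V1 \ X, w u v = (((n + 3) / 4 : ℕ) : ℝ) * p := by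
        rw [Finset.sum_congr rfl fun v hv => keyp u hu v hv, Finset.sum_const, hb,
          nsmul_eq_mul]
      have e2 : ∑ v ∈ V2, w u v = (n : ℝ) / 2 * q := by
        rw [Finset.sum_congr rfl fun v hv => keyq u (hX hu) v hv, Finset.sum_const,
          nsmul_eq_mul, hc2]
      rw [e1, e2]
    rw [Finset.sum_congr rfl this, Finset.sum_const, hXcard, nsmul_eq_mul]
    ring
  refine ⟨sum1, sum2, ?_⟩
  rw [sum2]
  set a : ℝ := ((n / 4 : ℕ) : ℝ) with ha'
  set b : ℝ := (((n + 3) / 4 : ℕ) : ℝ) with hb'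
  have ha : 0 ≤ a := Nat.cast_nonneg _
  have hab : a ≤ b := by
    rw [ha', hb']; exact_mod_cast Nat.div_le_div_right (by omega)
  have hsum : (n : ℝ) = 2 * (a + b) := by
    rw [ha', hb']
    have : n = 2 * (n / 4 + (n + 3) / 4) := by omega
    exact_mod_cast this
  rw [hsum]
  have hpab : p * a * b ≤ 2 * q * (a * b) := by
    nlinarith [mul_nonneg ha (le_trans ha hab)]
  nlinarith [mul_nonneg (mul_nonneg hq (sub_nonneg.mpr hab)) (le_trans ha hab)]
end

section
/- Let μ₁, …, μ_k ∈ {0,1}^m be mindset vectors such that every partition of the set {μ₁, …, μ_k} into two parts is induced by some coordinate (i.e., for every S ⊆ {1,…,k} there is a question x ≤ m with μ_i(x) = 1 iff i ∈ S). Then any vector τ ∈ {0,1}^m with the property that for every triple of coordinates x, y, z there exists some mindset μ_i agreeing with τ on x, y, and z must itself equal one of the μ_i. -/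
theorem stmt11 (k m : ℕ) (μ : Fin k → Fin m → Bool)
    (hsep : ∀ S : Finset (Fin k), ∃ x : Fin m, ∀ i, μ i x = true ↔ i ∈ S)
    (τ : Fin m → Bool)
    (hτ : ∀ x y z : Fin m, ∃ i, μ i x = τ x ∧ μ i y = τ y ∧ μ i z = τ z) :
    ∃ i, τ = μ i := by
  set A : Fin m → Finset (Fin k) :=
    fun x => Finset.univ.filter (fun i => μ i x = τ x) with hA
  have hmem : ∀ x i, i ∈ A x ↔ μ i x = τ x := by
    intro x i; simp [hA]
  -- closure under intersection
  have hclos : ∀ x y : Fin m, ∃ w, A w = A x ∩ A y := by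
    intro x y
    obtain ⟨w, hw⟩ := hsep (A x ∩ A y)
    obtain ⟨i, hix, hiy, hiw⟩ := hτ x y w
    have hiS : i ∈ A x ∩ A y := by
      simp [Finset.mem_inter, hmem, hix, hiy]
    have hτw : τ w = true := by
      rw [← hiw]; exact (hw i).mpr hiS
    refine ⟨w, ?_⟩
    ext j
    simp only [hmem, Finset.mem_inter, hτw]
    rw [hw j, Finset.mem_inter]
    simp [hmem]
  -- m ≥ 1
  obtain ⟨x0, _⟩ := hsep ∅
  have hne : (Finset.univ : Finset (Fin m)).Nonempty := ⟨x0, Finset.mem_univ _⟩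
  obtain ⟨w, -, hwmin⟩ := Finset.exists_min_image Finset.univ (fun x => (A x).card) hne
  have hsub : ∀ x, A w ⊆ A x := by
    intro x
    obtain ⟨v, hv⟩ := hclos w x
    have h1 : A v ⊆ A w := by rw [hv]; exact Finset.inter_subset_left
    have h2 : (A w).card ≤ (A v).card := hwmin v (Finset.mem_univ _)
    have : A v = A w := Finset.eq_of_subset_of_card_le h1 h2
    rw [← this, hv]; exact Finset.inter_subset_right
  obtain ⟨i, hi1, -, -⟩ := hτ w w w
  have hiw : i ∈ A w := (hmem w i).mpr hi1
  refine ⟨i, funext fun x => ?_⟩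
  exact ((hmem x i).mp (hsub x hiw)).symm
end
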